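/- For positive semidefinite matrices A, B and a projection Π, with Q₂ⁱ(X‖Y) := tr[X·(X/Y)] where X/Y is the integral matrix quotient, one has Q₂ⁱ(A‖A+B) + Q₂ⁱ(B‖A+B) ≥ tr[(A⊕B)Π̂]²/tr[(A+B)⊕(A+B) Π̂] + tr[(A⊕B)(1−Π̂)]²/tr[(A+B)⊕(A+B)(1−Π̂)], where Π̂ = Π ⊕ (1−Π). -/

import Mathlib

open MeasureTheory Matrix Set ComplexOrder

variable {m : Type*} [Fintype m] [DecidableEq m]

/-- The integral matrix quotient `A/B := ∫₀^∞ (λ+B)⁻¹ A (λ+B)⁻¹ dλ`, defined entrywise. -/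
noncomputable def mq (A B : Matrix m m ℂ) : Matrix m m ℂ :=
  Matrix.of fun i j =>
    ∫ l in Set.Ioi (0:ℝ),
      ((l • (1 : Matrix m m ℂ) + B)⁻¹ * A * (l • (1 : Matrix m m ℂ) + B)⁻¹) i j

/-- Real power of a Hermitian matrix via the spectral decomposition (junk value `0` otherwise). -/
noncomputable def mrpow (A : Matrix m m ℂ) (r : ℝ) : Matrix m m ℂ :=
  if h : A.IsHermitian then
    (h.eigenvectorUnitary : Matrix m m ℂ) *
      Matrix.diagonal (fun i => ((h.eigenvalues i ^ r : ℝ) : ℂ)) *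
      star (h.eigenvectorUnitary : Matrix m m ℂ)
  else 0

/-- Trace norm of a Hermitian matrix: the sum of the absolute values of its eigenvalues
(junk value `0` otherwise). -/
noncomputable def traceNorm (A : Matrix m m ℂ) : ℝ :=
  if h : A.IsHermitian then ∑ i, |h.eigenvalues i| else 0

/-- Operator norm of a positive semidefinite (in particular Hermitian) matrix:
its largest eigenvalue (junk value `0` otherwise). -/
noncomputable def opNorm (A : Matrix m m ℂ) : ℝ :=
  if h : A.IsHermitian then ⨆ i, h.eigenvalues i else 0

/-- `Q₂^ι(A‖B) = tr[A (A/B)] = ∫₀^∞ tr[A (t+B)⁻¹ A (t+B)⁻¹] dt`. -/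
noncomputable def Q2iota (A B : Matrix m m ℂ) : ℝ :=
  ∫ t in Set.Ioi (0:ℝ),
    (A * (t • (1 : Matrix m m ℂ) + B)⁻¹ * A * (t • (1 : Matrix m m ℂ) + B)⁻¹).trace.re

/-- A projective measurement: a finite family of mutually orthogonal projections
summing to the identity. -/
structure PVM (m : Type*) [Fintype m] [DecidableEq m] where
  k : ℕ
  P : Fin k → Matrix m m ℂ
  herm : ∀ j, (P j).IsHermitian
  idem : ∀ j, P j * P j = P j
  orth : ∀ j j', j ≠ j' → P j * P j' = 0
  sum_eq : ∑ j, P j = 1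

/-- The value `∑_j (tr[ρΛ_j])^α (tr[σΛ_j])^{1-α}` of a projective measurement. -/
noncomputable def measVal (α : ℝ) (ρ σ : Matrix m m ℂ) (Λ : PVM m) : ℝ :=
  ∑ j, ((ρ * Λ.P j).trace.re) ^ α * ((σ * Λ.P j).trace.re) ^ (1 - α)

/-- The measured Rényi quantity `Q̌_α(ρ‖σ)`: for `α ∈ [1/2,1)` it is the infimum over
projective measurements of `∑_j (tr[ρΛ_j])^α (tr[σΛ_j])^{1-α}`. -/
noncomputable def Qmeas (α : ℝ) (ρ σ : Matrix m m ℂ) : ℝ :=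
  sInf {v | ∃ Λ : PVM m, v = measVal α ρ σ Λ}

/-- The measured Rényi divergence `Ď_α(ρ‖σ) = (α-1)⁻¹ log Q̌_α(ρ‖σ)`. -/
noncomputable def Dmeas (α : ℝ) (ρ σ : Matrix m m ℂ) : ℝ :=
  (1 / (α - 1)) * Real.log (Qmeas α ρ σ)

/-- The classical-quantum state `∑_x P(x) |x⟩⟨x| ⊗ ρ_x` as a matrix on `X × m`. -/
noncomputable def cqState {X : Type*} [Fintype X] [DecidableEq X]
    (P : X → ℝ) (ρ : X → Matrix m m ℂ) : Matrix (X × m) (X × m) ℂ :=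
  Matrix.of fun p q => if p.1 = q.1 then (P p.1 : ℂ) * ρ p.1 p.2 q.2 else 0

open Filter in
private lemma aux_int_sq (c : ℝ) (hc : 0 < c) :
    IntegrableOn (fun l : ℝ => ((l + c) ^ 2)⁻¹) (Ioi 0) ∧
      ∫ l in Ioi (0:ℝ), ((l + c) ^ 2)⁻¹ = c⁻¹ := by
  have hderiv : ∀ x ∈ Ici (0:ℝ), HasDerivAt (fun l : ℝ => -(l + c)⁻¹) (((x + c) ^ 2)⁻¹) x := by
    intro x hx
    have hx0 : (0:ℝ) ≤ x := hx
    have hne : x + c ≠ 0 := by positivity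
    have h1 : HasDerivAt (fun l : ℝ => l + c) 1 x := (hasDerivAt_id x).add_const c
    have h2 := (h1.inv hne).neg
    rw [show ((x + c) ^ 2)⁻¹ = -(-1 / (x + c) ^ 2) by rw [neg_div, neg_neg, one_div]]
    exact h2
  have hpos : ∀ x ∈ Ioi (0:ℝ), 0 ≤ ((x + c) ^ 2)⁻¹ := by
    intro x hx
    have : (0:ℝ) < x := hx
    positivity
  have htend : Tendsto (fun l : ℝ => -(l + c)⁻¹) atTop (nhds 0) := by
    rw [show (0:ℝ) = -0 by ring]
    exact (Filter.Tendsto.inv_tendsto_atTop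
      (tendsto_atTop_add_const_right _ c tendsto_id)).neg
  refine ⟨integrableOn_Ioi_deriv_of_nonneg' hderiv hpos htend, ?_⟩
  rw [integral_Ioi_of_hasDerivAt_of_nonneg' hderiv hpos htend]
  simp

private lemma aux_int (s t : ℝ) (hs : 0 < s) (ht : 0 < t) :
    IntegrableOn (fun l : ℝ => (l + s)⁻¹ * (l + t)⁻¹) (Ioi 0) := by
  have hc0 : 0 < min s t := lt_min hs ht
  have hmeas : Measurable (fun l : ℝ => (l + s)⁻¹ * (l + t)⁻¹) :=
    ((measurable_id.add_const s).inv).mul ((measurable_id.add_const t).inv)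
  refine (aux_int_sq (min s t) hc0).1.mono' hmeas.aestronglyMeasurable ?_
  filter_upwards [ae_restrict_mem measurableSet_Ioi] with l hl
  have hl0 : (0:ℝ) < l := hl
  have h1 : 0 < l + s := by linarith
  have h2 : 0 < l + t := by linarith
  have h3 : 0 < l + min s t := by have := lt_min hs ht; linarith
  rw [Real.norm_eq_abs, abs_of_nonneg (by positivity)]
  rw [sq, mul_inv]
  have e1 : l + min s t ≤ l + s := by have := min_le_left s t; linarith
  have e2 : l + min s t ≤ l + t := by have := min_le_right s t; linarith
  exact mul_le_mul (inv_anti₀ h3 e1) (inv_anti₀ h3 e2)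
    (by positivity) (by positivity)

private lemma aux_lower (s t : ℝ) (hs : 0 < s) (ht : 0 < t) :
    2 / (s + t) ≤ ∫ l in Ioi (0:ℝ), (l + s)⁻¹ * (l + t)⁻¹ := by
  have hm : (0:ℝ) < (s + t) / 2 := by linarith
  have hval := (aux_int_sq ((s + t) / 2) hm).2
  have h2 : 2 / (s + t) = ((s + t) / 2)⁻¹ := by
    rw [inv_div]
  rw [h2, ← hval]
  refine setIntegral_mono_on (aux_int_sq ((s + t) / 2) hm).1 (aux_int s t hs ht)
    measurableSet_Ioi ?_
  intro l hl
  have hl0 : (0:ℝ) < l := hl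
  have h1 : 0 < l + s := by linarith
  have h2 : 0 < l + t := by linarith
  rw [← mul_inv]
  apply inv_anti₀ (by positivity)
  nlinarith [sq_nonneg (s - t)]

private lemma key_step {n : Type*} [Fintype n] [DecidableEq n] (ρ σ Z : Matrix n n ℂ)
    (hρ : ρ.IsHermitian) (hσ : σ.PosDef) (hZ : Z.IsHermitian) :
    2 * ((ρ * Z).trace.re) ≤ ((ρ * mq ρ σ).trace.re) + ((σ * Z * Z).trace.re) := by
  classical
  have hσh : σ.IsHermitian := hσ.1
  set V : Matrix n n ℂ := (hσh.eigenvectorUnitary : Matrix n n ℂ) with hVdef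
  obtain ⟨hV1, hV2⟩ := Unitary.mem_iff.mp hσh.eigenvectorUnitary.2
  set s : n → ℝ := hσh.eigenvalues with hsdef
  have hs : ∀ p, 0 < s p := fun p => hσ.eigenvalues_pos p
  have hspec : σ = V * Matrix.diagonal (fun p => ((s p : ℝ) : ℂ)) * star V := by
    have := hσh.spectral_theorem
    convert this using 3
    rfl
  set R : Matrix n n ℂ := star V * ρ * V with hRdef
  set ζ : Matrix n n ℂ := star V * Z * V with hζdef
  have hconj : ∀ X : Matrix n n ℂ, V * (star V * X * V) * star V = X := by
    intro X
    simp only [mul_assoc]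
    rw [hV2, mul_one, ← mul_assoc, hV2, one_mul]
  have hρVR : ρ = V * R * star V := (hconj ρ).symm
  have hZVζ : Z = V * ζ * star V := (hconj Z).symm
  have hR : R.IsHermitian := by
    rw [hRdef, Matrix.star_eq_conjTranspose]
    exact Matrix.isHermitian_conjTranspose_mul_mul V hρ
  have hζ : ζ.IsHermitian := by
    rw [hζdef, Matrix.star_eq_conjTranspose]
    exact Matrix.isHermitian_conjTranspose_mul_mul V hZ
  set cl : ℝ → n → ℂ := fun l p => (((l + s p)⁻¹ : ℝ) : ℂ) with hcl
  set C : ℝ → Matrix n n ℂ := fun l => Matrix.diagonal (cl l) with hC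
  -- inverse formula
  have hDl : ∀ l : ℝ, l • (1 : Matrix n n ℂ) + σ
      = V * Matrix.diagonal (fun p => ((l + s p : ℝ) : ℂ)) * star V := by
    intro l
    have h1 : l • (1 : Matrix n n ℂ) = V * (l • (1 : Matrix n n ℂ)) * star V := by
      rw [mul_smul_comm, mul_one, smul_mul_assoc, hV2]
    conv_lhs => rw [h1, hspec]
    rw [← add_mul, ← mul_add]
    congr 1
    congr 1
    ext i j
    by_cases h : i = j
    · subst h
      simp [Matrix.diagonal_apply_eq, Matrix.one_apply_eq, Complex.real_smul]
    · simp [Matrix.diagonal_apply_ne _ h, Matrix.one_apply_ne h]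
  have hinv : ∀ l ∈ Ioi (0:ℝ), (l • (1 : Matrix n n ℂ) + σ)⁻¹ = V * C l * star V := by
    intro l hl
    have hl0 : (0:ℝ) < l := hl
    apply Matrix.inv_eq_left_inv
    rw [hDl l]
    have hCD : C l * Matrix.diagonal (fun p => ((l + s p : ℝ) : ℂ)) = 1 := by
      have he : (fun p => cl l p * ((l + s p : ℝ) : ℂ)) = fun _ => (1:ℂ) := by
        funext p
        have hne : l + s p ≠ 0 := by have := hs p; positivity
        simp only [hcl]
        rw [← Complex.ofReal_mul, inv_mul_cancel₀ hne, Complex.ofReal_one]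
      rw [hC, Matrix.diagonal_mul_diagonal, he, Matrix.diagonal_one]
    calc V * C l * star V * (V * Matrix.diagonal (fun p => ((l + s p : ℝ) : ℂ)) * star V)
        = V * (C l * (star V * V) * Matrix.diagonal (fun p => ((l + s p : ℝ) : ℂ))) * star V := by
          simp only [mul_assoc]
      _ = 1 := by rw [hV1, mul_one, hCD, mul_one, hV2]
  set F : ℝ → Matrix n n ℂ := fun l => V * (C l * R * C l) * star V with hF
  have hFl : ∀ l ∈ Ioi (0:ℝ), (l • (1 : Matrix n n ℂ) + σ)⁻¹ * ρ * (l • (1 : Matrix n n ℂ) + σ)⁻¹ = F l := by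
    intro l hl
    rw [hinv l hl]
    conv_lhs => rw [hρVR]
    rw [hF]
    simp only [mul_assoc]
    rw [← mul_assoc (star V) V, hV1, one_mul, ← mul_assoc (star V) V, hV1, one_mul]
  have hmq : mq ρ σ = Matrix.of fun i j => ∫ l in Ioi (0:ℝ), F l i j := by
    refine Matrix.ext fun i j => ?_
    show (∫ l in Ioi (0:ℝ), ((l • (1 : Matrix n n ℂ) + σ)⁻¹ * ρ * (l • (1 : Matrix n n ℂ) + σ)⁻¹) i j)
      = ∫ l in Ioi (0:ℝ), F l i j
    refine setIntegral_congr_fun measurableSet_Ioi fun l hl => ?_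
    rw [hFl l hl]
  set gC : n → n → ℝ → ℂ := fun p q l => (((l + s p)⁻¹ * (l + s q)⁻¹ : ℝ) : ℂ) with hgC
  have hgInt : ∀ p q, IntegrableOn (gC p q) (Ioi 0) :=
    fun p q => (aux_int _ _ (hs p) (hs q)).ofReal
  set kR : n → n → ℝ := fun p q => ∫ l in Ioi (0:ℝ), (l + s p)⁻¹ * (l + s q)⁻¹ with hkR
  have hgK : ∀ p q, ∫ l in Ioi (0:ℝ), gC p q l = ((kR p q : ℝ) : ℂ) := by
    intro p q
    rw [hgC, hkR]
    exact integral_ofReal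
  have hCRC : ∀ l : ℝ, C l * R * C l = Matrix.of fun p q => cl l p * R p q * cl l q := by
    intro l
    ext p q
    simp only [hC, Matrix.mul_diagonal, Matrix.diagonal_mul, Matrix.of_apply]
  have hFentry : ∀ (l : ℝ) i j, F l i j = ∑ p, ∑ q, (V i p * R p q * star (V j q)) * gC p q l := by
    intro l i j
    have : F l i j = (V * Matrix.of (fun p q => cl l p * R p q * cl l q) * star V) i j := by
      simp only [hF]
      rw [hCRC l]
    rw [this]
    simp only [Matrix.mul_apply, Matrix.of_apply, Matrix.star_apply, Matrix.conjTranspose_apply,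
      Finset.sum_mul]
    rw [Finset.sum_comm]
    refine Finset.sum_congr rfl fun p _ => Finset.sum_congr rfl fun q _ => ?_
    simp only [hcl, hgC]
    push_cast
    ring
  have hFint : ∀ i j, IntegrableOn (fun l => F l i j) (Ioi 0) := by
    intro i j
    have he : (fun l => F l i j) = fun l => ∑ p, ∑ q, (V i p * R p q * star (V j q)) * gC p q l :=
      funext fun l => hFentry l i j
    rw [he]
    exact integrable_finset_sum _ fun p _ => integrable_finset_sum _ fun q _ =>
      (hgInt p q).const_mul _
  have htrace_int : (ρ * mq ρ σ).trace = ∫ l in Ioi (0:ℝ), (ρ * F l).trace := by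
    rw [hmq]
    have e1 : (ρ * Matrix.of fun i j => ∫ l in Ioi (0:ℝ), F l i j).trace
        = ∑ i, ∑ j, ρ i j * ∫ l in Ioi (0:ℝ), F l j i := by
      simp [Matrix.trace, Matrix.diag_apply, Matrix.mul_apply, Matrix.of_apply]
    rw [e1]
    have e2 : ∀ (l : ℝ), (ρ * F l).trace = ∑ i, ∑ j, ρ i j * F l j i := by
      intro l
      simp [Matrix.trace, Matrix.diag_apply, Matrix.mul_apply, Matrix.of_apply]
    calc ∑ i, ∑ j, ρ i j * ∫ l in Ioi (0:ℝ), F l j i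
        = ∑ i, ∑ j, ∫ l in Ioi (0:ℝ), ρ i j * F l j i := by
          exact Finset.sum_congr rfl fun i _ => Finset.sum_congr rfl fun j _ =>
            (integral_const_mul _ _).symm
      _ = ∫ l in Ioi (0:ℝ), ∑ i, ∑ j, ρ i j * F l j i := by
          rw [integral_finset_sum (f := fun i l => ∑ j, ρ i j * F l j i) _ fun i _ => integrable_finset_sum _ fun j _ =>
            (hFint j i).const_mul _]
          exact Finset.sum_congr rfl fun i _ =>
            (integral_finset_sum _ fun j _ => (hFint j i).const_mul _).symm
      _ = ∫ l in Ioi (0:ℝ), (ρ * F l).trace := by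
          exact setIntegral_congr_fun measurableSet_Ioi fun l _ => (e2 l).symm
  have hptwise : ∀ (l : ℝ), (ρ * F l).trace = ∑ p, ∑ q, (Complex.normSq (R p q) : ℂ) * gC p q l := by
    intro l
    have h1 : ρ * F l = V * (R * (C l * R * C l)) * star V := by
      conv_lhs => rw [hρVR, hF]
      simp only [mul_assoc]
      rw [← mul_assoc (star V) V, hV1, one_mul]
    rw [h1, Matrix.trace_mul_cycle, ← mul_assoc, hV1, one_mul, hCRC l]
    simp only [Matrix.trace, Matrix.diag_apply, Matrix.mul_apply, Matrix.of_apply]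
    refine Finset.sum_congr rfl fun p _ => Finset.sum_congr rfl fun q _ => ?_
    have hconjR : star (R p q) = R q p := hR.apply q p
    calc R p q * (cl l q * R q p * cl l p)
        = (R p q * star (R p q)) * (cl l p * cl l q) := by rw [hconjR]; ring
      _ = (Complex.normSq (R p q) : ℂ) * gC p q l := by
          rw [Complex.star_def, Complex.mul_conj, hcl, hgC]
          push_cast
          ring
  have hQ : (ρ * mq ρ σ).trace.re = ∑ p, ∑ q, Complex.normSq (R p q) * kR p q := by
    rw [htrace_int]
    have e : ∫ l in Ioi (0:ℝ), (ρ * F l).trace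
        = ∑ p, ∑ q, (Complex.normSq (R p q) : ℂ) * ((kR p q : ℝ) : ℂ) := by
      rw [setIntegral_congr_fun measurableSet_Ioi fun l _ => hptwise l]
      rw [integral_finset_sum _ fun p _ => integrable_finset_sum _ fun q _ =>
        (hgInt p q).const_mul _]
      refine Finset.sum_congr rfl fun p _ => ?_
      rw [integral_finset_sum _ fun q _ => (hgInt p q).const_mul _]
      refine Finset.sum_congr rfl fun q _ => ?_
      rw [integral_const_mul, hgK p q]
    rw [e]
    push_cast
    rw [Complex.re_sum]
    refine Finset.sum_congr rfl fun p _ => ?_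
    rw [Complex.re_sum]
    refine Finset.sum_congr rfl fun q _ => ?_
    norm_cast
  -- traces of ρZ and σZZ in eigenbasis
  have hTr1 : (ρ * Z).trace = (R * ζ).trace := by
    conv_lhs => rw [hρVR, hZVζ]
    have : V * R * star V * (V * ζ * star V) = V * (R * ζ) * star V := by
      simp only [mul_assoc]
      rw [← mul_assoc (star V) V, hV1, one_mul]
    rw [this, Matrix.trace_mul_cycle, ← mul_assoc, hV1, one_mul]
  have hTr2 : (σ * Z * Z).trace = (Matrix.diagonal (fun p => ((s p : ℝ) : ℂ)) * ζ * ζ).trace := by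
    conv_lhs => rw [hspec, hZVζ]
    have : V * Matrix.diagonal (fun p => ((s p : ℝ) : ℂ)) * star V * (V * ζ * star V) * (V * ζ * star V)
        = V * (Matrix.diagonal (fun p => ((s p : ℝ) : ℂ)) * ζ * ζ) * star V := by
      simp only [mul_assoc]
      rw [← mul_assoc (star V) V, hV1, one_mul, ← mul_assoc (star V) V, hV1, one_mul]
    rw [this, Matrix.trace_mul_cycle, ← mul_assoc, hV1, one_mul]
  have hx : (ρ * Z).trace.re = ∑ p, ∑ q, (R p q * star (ζ p q)).re := by
    rw [hTr1]
    have : (R * ζ).trace = ∑ p, ∑ q, R p q * star (ζ p q) := by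
      simp only [Matrix.trace, Matrix.diag_apply, Matrix.mul_apply]
      exact Finset.sum_congr rfl fun p _ => Finset.sum_congr rfl fun q _ => by
        rw [hζ.apply q p]
    rw [this, Complex.re_sum]
    exact Finset.sum_congr rfl fun p _ => Complex.re_sum _ _
  have hW : (σ * Z * Z).trace.re = ∑ p, ∑ q, s p * Complex.normSq (ζ p q) := by
    rw [hTr2]
    have : (Matrix.diagonal (fun p => ((s p : ℝ) : ℂ)) * ζ * ζ).trace
        = ∑ p, ∑ q, ((s p * Complex.normSq (ζ p q) : ℝ) : ℂ) := by
      simp only [Matrix.trace, Matrix.diag_apply, Matrix.mul_apply, Matrix.diagonal_apply,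
        ite_mul, zero_mul, Finset.sum_ite_eq, Finset.mem_univ, if_true]
      refine Finset.sum_congr rfl fun p _ => Finset.sum_congr rfl fun q _ => ?_
      rw [show ζ q p = star (ζ p q) from (hζ.apply q p).symm, Complex.star_def, mul_assoc,
        Complex.mul_conj]
      push_cast
      ring
    rw [this]
    push_cast
    rw [Complex.re_sum]
    refine Finset.sum_congr rfl fun p _ => ?_
    rw [Complex.re_sum]
    refine Finset.sum_congr rfl fun q _ => ?_
    norm_cast
  -- symmetry
  have hsym2 : ∑ p, ∑ q, s q * Complex.normSq (ζ p q) = ∑ p, ∑ q, s p * Complex.normSq (ζ p q) := by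
    rw [Finset.sum_comm]
    refine Finset.sum_congr rfl fun p _ => Finset.sum_congr rfl fun q _ => ?_
    rw [show ζ q p = star (ζ p q) from (hζ.apply q p).symm, Complex.star_def, Complex.normSq_conj]
  -- per-term inequality
  have perterm : ∀ p q, 4 * (R p q * star (ζ p q)).re
      ≤ 2 * (Complex.normSq (R p q) * kR p q) + (s p + s q) * Complex.normSq (ζ p q) := by
    intro p q
    have hS : 0 < s p + s q := by have := hs p; have := hs q; linarith
    have hk := aux_lower (s p) (s q) (hs p) (hs q)
    have hk0 : 0 < kR p q := lt_of_lt_of_le (by positivity) hk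
    have hkS : 2 ≤ kR p q * (s p + s q) := by
      rw [div_le_iff₀ hS] at hk; linarith
    have hre : (R p q * star (ζ p q)).re ≤ ‖R p q‖ * ‖ζ p q‖ := by
      calc (R p q * star (ζ p q)).re ≤ ‖R p q * star (ζ p q)‖ := Complex.re_le_norm _
        _ = ‖R p q‖ * ‖ζ p q‖ := by
            rw [norm_mul, Complex.star_def, Complex.norm_conj]
    have hnsR : Complex.normSq (R p q) = ‖R p q‖ ^ 2 := (Complex.sq_norm _).symm
    have hnsζ : Complex.normSq (ζ p q) = ‖ζ p q‖ ^ 2 := (Complex.sq_norm _).symm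
    set a := ‖R p q‖
    set b := ‖ζ p q‖
    have ha : 0 ≤ a := norm_nonneg _
    have hb : 0 ≤ b := norm_nonneg _
    rw [hnsR, hnsζ]
    nlinarith [sq_nonneg (kR p q * a - b), mul_nonneg (sub_nonneg.mpr hkS) (sq_nonneg b),
      hk0, hre, mul_pos hk0 hk0]
  -- assemble
  rw [hQ, hx, hW]
  have hsum : ∑ p, ∑ q, (4 * (R p q * star (ζ p q)).re)
      ≤ ∑ p, ∑ q, (2 * (Complex.normSq (R p q) * kR p q) + (s p + s q) * Complex.normSq (ζ p q)) :=
    Finset.sum_le_sum fun p _ => Finset.sum_le_sum fun q _ => perterm p q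
  have eL : ∑ p, ∑ q, (4 * (R p q * star (ζ p q)).re)
      = 4 * ∑ p, ∑ q, (R p q * star (ζ p q)).re := by
    rw [Finset.mul_sum]
    exact Finset.sum_congr rfl fun p _ => (Finset.mul_sum _ _ _).symm
  have eR : ∑ p, ∑ q, (2 * (Complex.normSq (R p q) * kR p q) + (s p + s q) * Complex.normSq (ζ p q))
      = 2 * (∑ p, ∑ q, Complex.normSq (R p q) * kR p q)
        + ((∑ p, ∑ q, s p * Complex.normSq (ζ p q)) + (∑ p, ∑ q, s q * Complex.normSq (ζ p q))) := by
    rw [Finset.mul_sum, ← Finset.sum_add_distrib, ← Finset.sum_add_distrib]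
    refine Finset.sum_congr rfl fun p _ => ?_
    rw [Finset.mul_sum, ← Finset.sum_add_distrib, ← Finset.sum_add_distrib]
    refine Finset.sum_congr rfl fun q _ => ?_
    ring
  rw [eL, eR, hsym2] at hsum
  linarith

private lemma proj_sq {n : Type*} [Fintype n] [DecidableEq n] (P : Matrix n n ℂ)
    (hP2 : P * P = P) (c d : ℂ) :
    (c • P + d • (1 - P)) * (c • P + d • (1 - P)) = (c * c) • P + (d * d) • (1 - P) := by
  have hPQ : P * (1 - P) = 0 := by rw [mul_sub, mul_one, hP2, sub_self]
  have hQP : (1 - P) * P = 0 := by rw [sub_mul, one_mul, hP2, sub_self]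
  have hQQ : (1 - P) * (1 - P) = 1 - P := by
    rw [sub_mul, one_mul, mul_sub, mul_one, hP2, sub_self, sub_zero]
  simp only [add_mul, mul_add, Matrix.smul_mul, Matrix.mul_smul, hP2, hPQ, hQP, hQQ,
    smul_smul, smul_zero, add_zero, zero_add]

private lemma herm_comb {n : Type*} [Fintype n] [DecidableEq n] (P Q : Matrix n n ℂ)
    (hP : P.IsHermitian) (hQ : Q.IsHermitian) (a b : ℝ) :
    (((a : ℂ) • P + (b : ℂ) • Q)).IsHermitian := by
  have ha : star ((a : ℝ) : ℂ) = ((a : ℝ) : ℂ) := by rw [Complex.star_def, Complex.conj_ofReal]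
  have hb : star ((b : ℝ) : ℂ) = ((b : ℝ) : ℂ) := by rw [Complex.star_def, Complex.conj_ofReal]
  show _ = _
  rw [Matrix.conjTranspose_add, Matrix.conjTranspose_smul, Matrix.conjTranspose_smul,
    ha, hb, hP.eq, hQ.eq]

private lemma trace_blocks (X Y P Q : Matrix m m ℂ) :
    ((Matrix.fromBlocks X 0 0 Y) * (Matrix.fromBlocks P 0 0 Q)).trace
      = (X * P).trace + (Y * Q).trace := by
  rw [Matrix.fromBlocks_multiply]
  simp only [Matrix.mul_zero, Matrix.zero_mul, add_zero, zero_add]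
  simp [Matrix.trace, Fintype.sum_sum_type, Matrix.fromBlocks_apply₁₁, Matrix.fromBlocks_apply₂₂,
    Matrix.diag]

private lemma comb_trace_re (X P Q : Matrix m m ℂ) (a b : ℝ) :
    (X * ((a : ℂ) • P + (b : ℂ) • Q)).trace.re
      = a * (X * P).trace.re + b * (X * Q).trace.re := by
  rw [mul_add, Matrix.mul_smul, Matrix.mul_smul, Matrix.trace_add, Matrix.trace_smul,
    Matrix.trace_smul]
  simp [smul_eq_mul, Complex.add_re, Complex.mul_re]

set_option maxHeartbeats 1000000 in
/-- The data-processing step: for a projection `Π` with `Π̂ = Π ⊕ (1-Π)`,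
`Q₂^ι(A‖A+B) + Q₂^ι(B‖A+B)` dominates the corresponding two-outcome classical quantity. -/
theorem data_processing_step (A B Pr : Matrix m m ℂ)
    (hA : A.PosSemidef) (hB : B.PosSemidef) (hAB : (A + B).PosDef)
    (hPr : Pr.IsHermitian) (hPr2 : Pr * Pr = Pr)
    (hd₁ : 0 < ((Matrix.fromBlocks (A + B) 0 0 (A + B)) *
        (Matrix.fromBlocks Pr 0 0 (1 - Pr))).trace.re)
    (hd₂ : 0 < ((Matrix.fromBlocks (A + B) 0 0 (A + B)) *
        (1 - Matrix.fromBlocks Pr 0 0 (1 - Pr))).trace.re) :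
    ((Matrix.fromBlocks A 0 0 B) * (Matrix.fromBlocks Pr 0 0 (1 - Pr))).trace.re ^ 2
        / ((Matrix.fromBlocks (A + B) 0 0 (A + B)) *
            (Matrix.fromBlocks Pr 0 0 (1 - Pr))).trace.re
      + ((Matrix.fromBlocks A 0 0 B) * (1 - Matrix.fromBlocks Pr 0 0 (1 - Pr))).trace.re ^ 2
        / ((Matrix.fromBlocks (A + B) 0 0 (A + B)) *
            (1 - Matrix.fromBlocks Pr 0 0 (1 - Pr))).trace.re
    ≤ (A * mq A (A + B)).trace.re + (B * mq B (A + B)).trace.re := by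
  classical
  have hQh : (1 - Pr).IsHermitian := Matrix.isHermitian_one.sub hPr
  have hQ2 : (1 - Pr) * (1 - Pr) = 1 - Pr := by
    rw [sub_mul, one_mul, mul_sub, mul_one, hPr2, sub_self, sub_zero]
  have h1mP : (1 : Matrix (m ⊕ m) (m ⊕ m) ℂ) - Matrix.fromBlocks Pr 0 0 (1 - Pr)
      = Matrix.fromBlocks (1 - Pr) 0 0 Pr := by
    rw [← Matrix.fromBlocks_one]
    ext i j
    rcases i with i | i <;> rcases j with j | j <;>
      simp [Matrix.sub_apply, Matrix.fromBlocks_apply₁₁, Matrix.fromBlocks_apply₁₂,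
        Matrix.fromBlocks_apply₂₁, Matrix.fromBlocks_apply₂₂, Matrix.one_apply,
        Sum.inl.injEq, Sum.inr.injEq, sub_sub_cancel]
  -- abbreviations
  set q1 := (A * Pr).trace.re with hq1
  set q2 := (A * (1 - Pr)).trace.re with hq2
  set q3 := (B * Pr).trace.re with hq3
  set q4 := (B * (1 - Pr)).trace.re with hq4
  set p := ((A + B) * Pr).trace.re with hp
  set p' := ((A + B) * (1 - Pr)).trace.re with hp'
  have e₁ : ((Matrix.fromBlocks A 0 0 B) * (Matrix.fromBlocks Pr 0 0 (1 - Pr))).trace.re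
      = q1 + q4 := by
    rw [trace_blocks, Complex.add_re, hq1, hq4]
  have e₂ : ((Matrix.fromBlocks A 0 0 B) * (1 - Matrix.fromBlocks Pr 0 0 (1 - Pr))).trace.re
      = q2 + q3 := by
    rw [h1mP, trace_blocks, Complex.add_re, hq2, hq3]
  have d₁ : ((Matrix.fromBlocks (A + B) 0 0 (A + B)) *
      (Matrix.fromBlocks Pr 0 0 (1 - Pr))).trace.re = p + p' := by
    rw [trace_blocks, Complex.add_re, hp, hp']
  have d₂ : ((Matrix.fromBlocks (A + B) 0 0 (A + B)) *
      (1 - Matrix.fromBlocks Pr 0 0 (1 - Pr))).trace.re = p + p' := by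
    rw [h1mP, trace_blocks, Complex.add_re, hp, hp']
    ring
  rw [e₁, e₂, d₁, d₂]
  rw [d₁] at hd₁
  set τ := p + p' with hτdef
  have hτ : 0 < τ := hd₁
  set n₁ := q1 + q4 with hn₁
  set n₂ := q2 + q3 with hn₂
  set a := n₁ / τ with hadef
  set b := n₂ / τ with hbdef
  -- the two applications of key_step
  set Z₁ : Matrix m m ℂ := (a : ℂ) • Pr + (b : ℂ) • (1 - Pr) with hZ₁def
  set Z₂ : Matrix m m ℂ := (a : ℂ) • (1 - Pr) + (b : ℂ) • Pr with hZ₂def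
  have hZ₁h : Z₁.IsHermitian := herm_comb Pr (1 - Pr) hPr hQh a b
  have hZ₂h : Z₂.IsHermitian := herm_comb (1 - Pr) Pr hQh hPr a b
  have k1 := key_step A (A + B) Z₁ hA.1 hAB hZ₁h
  have k2 := key_step B (A + B) Z₂ hB.1 hAB hZ₂h
  have t1 : (A * Z₁).trace.re = a * q1 + b * q2 := comb_trace_re A Pr (1 - Pr) a b
  have t2 : (B * Z₂).trace.re = a * q4 + b * q3 := comb_trace_re B (1 - Pr) Pr a b
  have s1 : ((A + B) * Z₁ * Z₁).trace.re = a * a * p + b * b * p' := by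
    rw [mul_assoc, hZ₁def, proj_sq Pr hPr2]
    have := comb_trace_re (A + B) Pr (1 - Pr) (a * a) (b * b)
    rw [show (((a * a : ℝ)) : ℂ) = (a : ℂ) * (a : ℂ) by push_cast; ring,
      show (((b * b : ℝ)) : ℂ) = (b : ℂ) * (b : ℂ) by push_cast; ring] at this
    rw [this]
  have s2 : ((A + B) * Z₂ * Z₂).trace.re = a * a * p' + b * b * p := by
    have hsub : (1 : Matrix m m ℂ) - (1 - Pr) = Pr := sub_sub_cancel 1 Pr
    rw [mul_assoc, hZ₂def, show (a : ℂ) • (1 - Pr) + (b : ℂ) • Pr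
        = (a : ℂ) • (1 - Pr) + (b : ℂ) • (1 - (1 - Pr)) by rw [hsub],
      proj_sq (1 - Pr) hQ2]
    have := comb_trace_re (A + B) (1 - Pr) (1 - (1 - Pr)) (a * a) (b * b)
    rw [show (((a * a : ℝ)) : ℂ) = (a : ℂ) * (a : ℂ) by push_cast; ring,
      show (((b * b : ℝ)) : ℂ) = (b : ℂ) * (b : ℂ) by push_cast; ring] at this
    rw [this, hsub]
  rw [t1, s1] at k1
  rw [t2, s2] at k2
  -- relate p, p' to the q's
  have hpq : p = q1 + q3 := by
    rw [hp, add_mul, Matrix.trace_add, Complex.add_re, hq1, hq3]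
  have hp'q : p' = q2 + q4 := by
    rw [hp', add_mul, Matrix.trace_add, Complex.add_re, hq2, hq4]
  -- final arithmetic
  have hτ0 : τ ≠ 0 := ne_of_gt hτ
  have ean₁ : a * n₁ = n₁ ^ 2 / τ := by rw [hadef, div_mul_eq_mul_div, sq]
  have ebn₂ : b * n₂ = n₂ ^ 2 / τ := by rw [hbdef, div_mul_eq_mul_div, sq]
  have eaa : a * a * τ = n₁ ^ 2 / τ := by
    rw [hadef]; field_simp
  have ebb : b * b * τ = n₂ ^ 2 / τ := by
    rw [hbdef]; field_simp
  have e3 : a * a * p + b * b * p' + (a * a * p' + b * b * p) = n₁ ^ 2 / τ + n₂ ^ 2 / τ := by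
    have h5 : a * a * p + b * b * p' + (a * a * p' + b * b * p) = a * a * τ + b * b * τ := by
      rw [hτdef]; ring
    rw [h5, eaa, ebb]
  have e4 : (a * q1 + b * q2) + (a * q4 + b * q3) = n₁ ^ 2 / τ + n₂ ^ 2 / τ := by
    have h6 : (a * q1 + b * q2) + (a * q4 + b * q3) = a * n₁ + b * n₂ := by
      rw [hn₁, hn₂]; ring
    rw [h6, ean₁, ebn₂]
  linarith [k1, k2, e3, e4]
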